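/- arXiv:1705.06445 — 2 statements merged into one kernel-verified Lean document; each statement's English description precedes it below -/
import Mathlib

section
/- Let a>0, b>0, T>0 and let y:(0,T)→ℝ be continuously differentiable such that y'(t) ≤ -a·y(t)² + b holds for all t∈(0,T) at which y(t)>0. Then y(t) ≤ √(b/a)·coth(√(ab)·t) for all t∈(0,T). -/
noncomputable def Real.coth (x : ℝ) : ℝ := Real.cosh x / Real.sinh x

open Real Set Filter Topology

lemma coth_hasDerivAt {x : ℝ} (hx : Real.sinh x ≠ 0) :
    HasDerivAt Real.coth (1 - Real.coth x ^ 2) x := by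
  have h := (Real.hasDerivAt_cosh x).div (Real.hasDerivAt_sinh x) hx
  have heq : 1 - Real.coth x ^ 2
      = (Real.sinh x * Real.sinh x - Real.cosh x * Real.cosh x) / Real.sinh x ^ 2 := by
    simp only [Real.coth]
    field_simp
  rw [heq]
  exact h

lemma coth_pos {x : ℝ} (hx : 0 < x) : 0 < Real.coth x :=
  div_pos (Real.cosh_pos x) (Real.sinh_pos_iff.2 hx)

/-- ODE comparison lemma (Riccati-type differential inequality). -/
theorem stmt_0 (a b T : ℝ) (ha : 0 < a) (hb : 0 < b) (hT : 0 < T)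
    (y y' : ℝ → ℝ)
    (hderiv : ∀ t ∈ Set.Ioo 0 T, HasDerivAt y (y' t) t)
    (hcont : ContinuousOn y' (Set.Ioo 0 T))
    (hineq : ∀ t ∈ Set.Ioo 0 T, 0 < y t → y' t ≤ -a * (y t) ^ 2 + b) :
    ∀ t ∈ Set.Ioo 0 T, y t ≤ Real.sqrt (b / a) * Real.coth (Real.sqrt (a * b) * t) := by
  set k := Real.sqrt (a * b) with hkdef
  set c := Real.sqrt (b / a) with hcdef
  have hk : 0 < k := Real.sqrt_pos.2 (mul_pos ha hb)
  have hc : 0 < c := Real.sqrt_pos.2 (div_pos hb ha)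
  have hac : a * c ^ 2 = b := by
    rw [hcdef, Real.sq_sqrt (div_pos hb ha).le]
    field_simp
  have hck : c * k = b := by
    rw [hcdef, hkdef, ← Real.sqrt_mul (div_pos hb ha).le]
    rw [show b / a * (a * b) = b ^ 2 by field_simp]
    exact Real.sqrt_sq hb.le
  intro t ht
  obtain ⟨ht0, htT⟩ := ht
  -- Step 1: the bound with shift ε and slack δ
  have key : ∀ ε ∈ Ioo (0:ℝ) t, ∀ δ : ℝ, 0 < δ →
      y t ≤ c * Real.coth (k * (t - ε)) + δ := by
    rintro ε ⟨hε0, hεt⟩ δ hδ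
    set B : ℝ → ℝ := fun s => c * Real.coth (k * (s - ε)) + δ with hBdef
    set B' : ℝ → ℝ := fun s => c * k * (1 - Real.coth (k * (s - ε)) ^ 2) with hB'def
    have hBd : ∀ s, ε < s → HasDerivAt B (B' s) s := by
      intro s hs
      have hsinh : Real.sinh (k * (s - ε)) ≠ 0 :=
        ne_of_gt (Real.sinh_pos_iff.2 (mul_pos hk (by linarith)))
      have h1 : HasDerivAt (fun u => k * (u - ε)) k s := by
        simpa using ((hasDerivAt_id s).sub_const ε).const_mul k
      have h2 := ((coth_hasDerivAt hsinh).comp s h1).const_mul c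
      have h3 := h2.add_const δ
      refine h3.congr_deriv ?_
      simp only [hB'def]
      ring
    -- find a starting point s₀ with y s₀ < B s₀
    have harg0 : Tendsto (fun s : ℝ => k * (s - ε)) (𝓝 ε) (𝓝 0) := by
      have hcont : ContinuousAt (fun s : ℝ => k * (s - ε)) ε := by fun_prop
      simpa using hcont.tendsto
    have harg : Tendsto (fun s : ℝ => k * (s - ε)) (𝓝[>] ε) (𝓝[>] (0:ℝ)) := by
      apply tendsto_nhdsWithin_of_tendsto_nhds_of_eventually_within
      · exact harg0.mono_left nhdsWithin_le_nhds
      · filter_upwards [self_mem_nhdsWithin] with s hs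
        exact mul_pos hk (sub_pos.2 hs)
    have hBtop : Tendsto B (𝓝[>] ε) atTop := by
      have hsinh : Tendsto (fun s : ℝ => Real.sinh (k * (s - ε))) (𝓝[>] ε) (𝓝[>] (0:ℝ)) := by
        apply tendsto_nhdsWithin_of_tendsto_nhds_of_eventually_within
        · have h := (Real.continuous_sinh.tendsto 0).comp
            (harg.mono_right nhdsWithin_le_nhds)
          simpa [Function.comp_def] using h
        · filter_upwards [self_mem_nhdsWithin] with s hs
          exact Real.sinh_pos_iff.2 (mul_pos hk (sub_pos.2 hs))
      have hcosh : Tendsto (fun s : ℝ => Real.cosh (k * (s - ε))) (𝓝[>] ε) (𝓝 1) := by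
        have h := (Real.continuous_cosh.tendsto 0).comp
          (harg.mono_right nhdsWithin_le_nhds)
        simpa [Function.comp_def] using h
      have hinv : Tendsto (fun s : ℝ => (Real.sinh (k * (s - ε)))⁻¹) (𝓝[>] ε) atTop :=
        tendsto_inv_nhdsGT_zero.comp hsinh
      have hcoth : Tendsto (fun s : ℝ => Real.coth (k * (s - ε))) (𝓝[>] ε) atTop := by
        have := hcosh.pos_mul_atTop one_pos hinv
        simpa [Real.coth, div_eq_mul_inv] using this
      have := hcoth.const_mul_atTop hc
      simpa [hBdef] using tendsto_atTop_add_const_right _ δ this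
    have hεT : ε ∈ Ioo (0:ℝ) T := ⟨hε0, lt_trans hεt htT⟩
    have hy : Tendsto y (𝓝[>] ε) (𝓝 (y ε)) :=
      (hderiv ε hεT).continuousAt.continuousWithinAt
    have hev1 : ∀ᶠ s in 𝓝[>] ε, y s < B s := by
      filter_upwards [hy.eventually (gt_mem_nhds (lt_add_one (y ε))),
        hBtop.eventually_gt_atTop (y ε + 1)] with s h1 h2
      linarith
    have hev2 : Ioo ε t ∈ 𝓝[>] ε := Ioo_mem_nhdsGT_of_mem ⟨le_refl ε, hεt⟩
    obtain ⟨s₀, hs₀lt, hs₀mem⟩ := (hev1.and (eventually_of_mem hev2 fun _ h => h)).exists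
    -- comparison on [s₀, t]
    have hsub : Icc s₀ t ⊆ Ioo 0 T := fun x hx =>
      ⟨lt_of_lt_of_le (lt_trans hε0 hs₀mem.1) hx.1, lt_of_le_of_lt hx.2 htT⟩
    have hgf : ContinuousOn y (Icc s₀ t) :=
      fun x hx => (hderiv x (hsub hx)).continuousAt.continuousWithinAt
    have hgf' : ∀ x ∈ Ico s₀ t, HasDerivWithinAt y (y' x) (Ici x) x :=
      fun x hx => (hderiv x (hsub (Ico_subset_Icc_self hx))).hasDerivWithinAt
    have hgB : ContinuousOn B (Icc s₀ t) := fun x hx =>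
      ((hBd x (lt_of_lt_of_le hs₀mem.1 hx.1)).continuousAt).continuousWithinAt
    have hgB' : ∀ x ∈ Ico s₀ t, HasDerivWithinAt B (B' x) (Ici x) x :=
      fun x hx => (hBd x (lt_of_lt_of_le hs₀mem.1 hx.1)).hasDerivWithinAt
    have hbound : ∀ x ∈ Ico s₀ t, y x = B x → y' x < B' x := by
      intro x hx hyx
      have hεx : ε < x := lt_of_lt_of_le hs₀mem.1 hx.1
      have hwpos : 0 < Real.coth (k * (x - ε)) :=
        coth_pos (mul_pos hk (sub_pos.2 hεx))
      set w := Real.coth (k * (x - ε)) with hw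
      have hBx : B x = c * w + δ := rfl
      have hypos : 0 < y x := by
        rw [hyx, hBx]; positivity
      have h := hineq x (hsub (Ico_subset_Icc_self hx)) hypos
      have hB'x : B' x = c * k * (1 - w ^ 2) := rfl
      calc y' x ≤ -a * (y x) ^ 2 + b := h
        _ < B' x := by
            rw [hyx, hBx, hB'x]
            nlinarith [mul_pos hc hwpos, mul_pos ha (mul_pos (mul_pos hc hwpos) hδ),
              mul_pos ha (mul_pos hδ hδ)]
    have hcomp : ∀ ⦃x⦄, x ∈ Icc s₀ t → y x ≤ B x :=
      image_le_of_deriv_right_lt_deriv_boundary' hgf hgf' hs₀lt.le hgB hgB' hbound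
    exact hcomp (right_mem_Icc.2 hs₀mem.2.le)
  -- Step 2: remove δ
  have key2 : ∀ ε ∈ Ioo (0:ℝ) t, y t ≤ c * Real.coth (k * (t - ε)) := fun ε hε =>
    le_of_forall_pos_le_add fun δ hδ => key ε hε δ hδ
  -- Step 3: take ε → 0⁺
  have hsinh : Real.sinh (k * t) ≠ 0 := ne_of_gt (Real.sinh_pos_iff.2 (mul_pos hk ht0))
  have hcothc : ContinuousAt Real.coth (k * t) := by
    unfold Real.coth
    exact Real.continuous_cosh.continuousAt.div Real.continuous_sinh.continuousAt hsinh
  have harg : Tendsto (fun ε : ℝ => k * (t - ε)) (𝓝[>] 0) (𝓝 (k * t)) := by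
    have hcont2 : ContinuousAt (fun ε : ℝ => k * (t - ε)) 0 := by fun_prop
    simpa using hcont2.tendsto.mono_left nhdsWithin_le_nhds
  have hconv : Tendsto (fun ε : ℝ => c * Real.coth (k * (t - ε))) (𝓝[>] 0)
      (𝓝 (c * Real.coth (k * t))) := (hcothc.tendsto.comp harg).const_mul c
  exact ge_of_tendsto hconv
    (eventually_of_mem (Ioo_mem_nhdsGT_of_mem ⟨le_refl 0, ht0⟩) fun ε hε => key2 ε hε)
end

section
/- For all real numbers a ≥ 0, b ≥ 0 and γ ∈ (0,1), the set S = {x ∈ [0,∞) : x ≤ a + b·x^γ} satisfies sup S ≤ a/(1-γ) + b^(1/(1-γ)). -/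
/-- For a ≥ 0, b ≥ 0 and γ ∈ (0,1), sup {x ∈ [0,∞) : x ≤ a + b x^γ} ≤ a/(1-γ) + b^(1/(1-γ)). -/
theorem stmt_1 (a b γ : ℝ) (ha : 0 ≤ a) (hb : 0 ≤ b) (hγ : γ ∈ Set.Ioo (0:ℝ) 1) :
    sSup {x : ℝ | 0 ≤ x ∧ x ≤ a + b * x ^ γ} ≤ a / (1 - γ) + b ^ (1 / (1 - γ)) := by
  obtain ⟨hγ0, hγ1⟩ := hγ
  have h1γ : (0:ℝ) < 1 - γ := by linarith
  set B := b ^ (1 / (1 - γ)) with hB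
  have hBnn : 0 ≤ B := Real.rpow_nonneg hb _
  apply Real.sSup_le
  · rintro x ⟨hx0, hxle⟩
    have hbB : B ^ (1 - γ) = b := by
      rw [hB, ← Real.rpow_mul hb, one_div, inv_mul_cancel₀ h1γ.ne', Real.rpow_one]
    have hyoung : B ^ (1 - γ) * x ^ γ ≤ (1 - γ) * B + γ * x := by
      have := Real.geom_mean_le_arith_mean2_weighted h1γ.le hγ0.le hBnn hx0
        (by ring)
      exact this
    rw [hbB] at hyoung
    have : x ≤ a + ((1 - γ) * B + γ * x) := le_trans hxle (by linarith)
    have h2 : (1 - γ) * x ≤ a + (1 - γ) * B := by linarith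
    rw [div_add' _ _ _ h1γ.ne']
    rw [le_div_iff₀ h1γ]
    linarith
  · positivity
end
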